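/- Let T be a finite tree with at least one edge and M ⊆ V(T). Suppose that for every edge e = {u, v} of T, the subdivided tree T_e (with new unmonitored vertex w) satisfies: every vertex of degree greater than 1 has at most one unmonitored neighbor and every unmonitored leaf is adjacent to a monitored vertex. Then M is a vertex cover of T (every edge has at least one monitored endpoint) and every leaf of T belongs to M. -/

import Mathlib

open SimpleGraph

/-- The tree `T` with the edge `{u,v}` subdivided by a new vertex `Sum.inr ()`. -/
def subdiv {V : Type*} (T : SimpleGraph V) (u v : V) : SimpleGraph (V ⊕ Unit) where
  Adj a b :=
    match a, b with
    | Sum.inl a, Sum.inl b => T.Adj a b ∧ ¬((a = u ∧ b = v) ∨ (a = v ∧ b = u))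
    | Sum.inl a, Sum.inr _ => a = u ∨ a = v
    | Sum.inr _, Sum.inl b => b = u ∨ b = v
    | Sum.inr _, Sum.inr _ => False
  symm := by
    constructor
    rintro (a | a) (b | b) h
    · exact ⟨h.1.symm, fun hc =>
        h.2 (hc.elim (fun h' => Or.inr ⟨h'.2, h'.1⟩) (fun h' => Or.inl ⟨h'.2, h'.1⟩))⟩
    · exact h
    · exact h
    · exact h
  loopless := by
    constructor
    rintro (a | a) h
    · exact T.loopless.irrefl a h.1
    · exact h

/-- Observability conditions of Lemma 1: every vertex of degree `> 1` has at most one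
unmonitored neighbor, and every unmonitored leaf is adjacent to a monitored vertex. -/
def obsCond {W : Type*} (G : SimpleGraph W) (M : Set W) : Prop :=
  (∀ x, 1 < (G.neighborSet x).ncard → {y | G.Adj x y ∧ y ∉ M}.Subsingleton) ∧
  (∀ x, (G.neighborSet x).ncard = 1 → x ∉ M → ∃ y, G.Adj x y ∧ y ∈ M)

/-- necessity direction of Theorem 1: if every edge-subdivided tree `T_e`
satisfies the observability conditions, then `M` is a vertex cover of `T` and contains
all its leaves. -/
theorem stmt2 {V : Type*} [Finite V] (T : SimpleGraph V) (hT : T.IsTree) (M : Set V)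
    (hedge : ∃ a b, T.Adj a b)
    (hobs : ∀ u v, T.Adj u v → obsCond (subdiv T u v) (Sum.inl '' M)) :
    (∀ a b, T.Adj a b → a ∈ M ∨ b ∈ M) ∧
    (∀ a, (T.neighborSet a).ncard = 1 → a ∈ M) := by
  constructor
  · intro a b hab
    have h := (hobs a b hab).1 (Sum.inr ())
    have hns : (subdiv T a b).neighborSet (Sum.inr ()) =
        {Sum.inl a, Sum.inl b} := by
      ext (c | c)
      · simp [SimpleGraph.neighborSet, subdiv]
      · simp [SimpleGraph.neighborSet, subdiv]
    have hcard : 1 < ((subdiv T a b).neighborSet (Sum.inr ())).ncard := by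
      rw [hns, Set.ncard_pair (by simp [hab.ne])]
      norm_num
    by_contra hc
    push_neg at hc
    have h1 : Sum.inl a ∈ {y | (subdiv T a b).Adj (Sum.inr ()) y ∧ y ∉ Sum.inl '' M} := by
      exact ⟨Or.inl rfl, by simp [hc.1]⟩
    have h2 : Sum.inl b ∈ {y | (subdiv T a b).Adj (Sum.inr ()) y ∧ y ∉ Sum.inl '' M} := by
      exact ⟨Or.inr rfl, by simp [hc.2]⟩
    have := h hcard h1 h2
    simp only [Sum.inl.injEq] at this
    exact hab.ne this
  · intro a ha
    obtain ⟨b, hb⟩ := Set.ncard_eq_one.mp ha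
    have hab : T.Adj a b := by
      have : b ∈ T.neighborSet a := by rw [hb]; rfl
      exact this
    by_contra haM
    have hns : (subdiv T a b).neighborSet (Sum.inl a) = {Sum.inr ()} := by
      ext (c | c)
      · constructor
        · rintro ⟨hadj, hne⟩
          have hc : c ∈ T.neighborSet a := hadj
          rw [hb] at hc
          exact absurd (Or.inl ⟨rfl, hc⟩) hne
        · simp
      · simp [SimpleGraph.neighborSet, subdiv]
    have h := (hobs a b hab).2 (Sum.inl a) (by rw [hns]; simp) (by simp [haM])
    obtain ⟨y, hy, hyM⟩ := h
    have hy' : y ∈ (subdiv T a b).neighborSet (Sum.inl a) := hy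
    rw [hns, Set.mem_singleton_iff] at hy'
    subst hy'
    simp at hyM
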